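/- For any integer β ≥ 2, the sum ∑_{r=1}^{β-1} 1/sin⁴(πr/β) equals (β⁴ + 10β² − 11)/45. -/

import Mathlib

open Finset MvPolynomial in
theorem newton_aux {σ : Type*} [DecidableEq σ] (s : Finset σ) (f : σ → ℂ) (k : ℕ) (hk : 0 < k) :
    ∑ r ∈ s, f r ^ k = (-1) ^ (k + 1) * k * (s.val.map f).esymm k -
      ∑ a ∈ Finset.HasAntidiagonal.antidiagonal k with a.1 ∈ Set.Ioo 0 k,
        (-1) ^ a.1 * (s.val.map f).esymm a.1 * ∑ r ∈ s, f r ^ a.2 := by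
  have h := congrArg (aeval (fun i : ↥s => f i))
    (psum_eq_mul_esymm_sub_sum (↥s) ℂ k hk)
  have hesymm : ∀ n, aeval (fun i : ↥s => f i) (esymm (↥s) ℂ n) = (s.val.map f).esymm n := by
    intro n
    rw [aeval_esymm_eq_multiset_esymm]
    congr 1
    rw [Finset.univ_eq_attach]
    rw [show (fun i : ↥s => f i) = f ∘ Subtype.val from rfl, ← Multiset.map_map, Finset.attach_val, Multiset.attach_map_val]
  have hpsum : ∀ n, aeval (fun i : ↥s => f i) (psum (↥s) ℂ n) = ∑ r ∈ s, f r ^ n := by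
    intro n
    simp [psum, Finset.sum_attach s (fun r => f r ^ n)]
  simp only [map_sub, map_mul, map_sum, map_pow, map_ofNat, map_neg, map_one, map_natCast,
    hesymm, hpsum] at h
  exact h

open Finset in
theorem newton4 {σ : Type*} [DecidableEq σ] (s : Finset σ) (f : σ → ℂ)
    (E : ℕ → ℂ) (hE : ∀ n, E n = (s.val.map f).esymm n) :
    (∑ r ∈ s, f r ^ 1 = E 1) ∧
    (∑ r ∈ s, f r ^ 2 = E 1 * ∑ r ∈ s, f r ^ 1 - 2 * E 2) ∧
    (∑ r ∈ s, f r ^ 3 = E 1 * (∑ r ∈ s, f r ^ 2) - E 2 * (∑ r ∈ s, f r ^ 1) + 3 * E 3) ∧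
    (∑ r ∈ s, f r ^ 4 = E 1 * (∑ r ∈ s, f r ^ 3) - E 2 * (∑ r ∈ s, f r ^ 2)
        + E 3 * (∑ r ∈ s, f r ^ 1) - 4 * E 4) := by
  have h1 := newton_aux s f 1 one_pos
  have h2 := newton_aux s f 2 two_pos
  have h3 := newton_aux s f 3 three_pos
  have h4 := newton_aux s f 4 four_pos
  rw [show Finset.HasAntidiagonal.antidiagonal 1 = {(0,1),(1,0)} from rfl] at h1
  rw [show Finset.HasAntidiagonal.antidiagonal 2 = {(0,2),(1,1),(2,0)} from rfl] at h2
  rw [show Finset.HasAntidiagonal.antidiagonal 3 = {(0,3),(1,2),(2,1),(3,0)} from rfl] at h3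
  rw [show Finset.HasAntidiagonal.antidiagonal 4 = {(0,4),(1,3),(2,2),(3,1),(4,0)} from rfl] at h4
  simp only [Finset.filter_insert, Finset.filter_singleton, Set.mem_Ioo] at h1 h2 h3 h4
  norm_num [Finset.sum_insert, Finset.mem_insert, hE] at h1 h2 h3 h4 ⊢
  refine ⟨h1, ?_, ?_, ?_⟩ <;> [rw [h2]; rw [h3]; rw [h4]] <;> ring

open Complex Polynomial Finset

open Complex Polynomial Finset

theorem root_aux (β : ℕ) (hβ : 2 ≤ β) (r : ℕ) (hr : r ∈ Finset.Icc 1 (β-1)) :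
    ((Real.cos (Real.pi * r / β) / Real.sin (Real.pi * r / β) : ℝ) + Complex.I) ^ β
      = ((Real.cos (Real.pi * r / β) / Real.sin (Real.pi * r / β) : ℝ) - Complex.I) ^ β := by
  set θ : ℝ := Real.pi * r / β with hθ
  have hβ0 : (0:ℝ) < β := by positivity
  have hr1 : 1 ≤ r := (Finset.mem_Icc.mp hr).1
  have hr2 : r ≤ β - 1 := (Finset.mem_Icc.mp hr).2
  have hrβ : (r:ℝ) < β := by
    have : r < β := lt_of_le_of_lt hr2 (Nat.sub_lt (by omega) one_pos)
    exact_mod_cast this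
  have hθ1 : 0 < θ := by
    apply div_pos (mul_pos Real.pi_pos (by exact_mod_cast hr1)) hβ0
  have hθ2 : θ < Real.pi := by
    rw [hθ, div_lt_iff₀ hβ0]
    nlinarith [Real.pi_pos]
  have hs : 0 < Real.sin θ := Real.sin_pos_of_pos_of_lt_pi hθ1 hθ2
  have hs0 : (Real.sin θ : ℂ) ≠ 0 := by exact_mod_cast hs.ne'
  have h1 : ((Real.cos θ / Real.sin θ : ℝ) : ℂ) + Complex.I
      = Complex.exp (θ * Complex.I) / (Real.sin θ : ℂ) := by
    rw [Complex.exp_mul_I, eq_div_iff hs0]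
    rw [Complex.ofReal_div, Complex.ofReal_cos, Complex.ofReal_sin, add_mul,
      div_mul_cancel₀ _ (by rwa [Complex.ofReal_sin] at hs0)]
    ring
  have h2 : ((Real.cos θ / Real.sin θ : ℝ) : ℂ) - Complex.I
      = Complex.exp ((-θ : ℝ) * Complex.I) / (Real.sin θ : ℂ) := by
    rw [Complex.exp_mul_I, eq_div_iff hs0]
    rw [Complex.ofReal_neg, Complex.cos_neg, Complex.sin_neg, Complex.ofReal_div,
      Complex.ofReal_cos, Complex.ofReal_sin, sub_mul,
      div_mul_cancel₀ _ (by rwa [Complex.ofReal_sin] at hs0)]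
    ring
  have hexp : ∀ a : ℝ, Complex.exp ((a:ℝ) * Complex.I) ^ β
      = Complex.exp ((β * a : ℝ) * Complex.I) := by
    intro a
    rw [← Complex.exp_nat_mul]
    push_cast
    ring_nf
  have hβθ : (β : ℝ) * θ = Real.pi * r := by
    rw [hθ]; field_simp
  rw [h1, h2, div_pow, div_pow, hexp, hexp, hβθ]
  have : (β : ℝ) * (-θ) = -(Real.pi * r) := by rw [← hβθ]; ring
  rw [this]
  have hpir : Complex.exp ((Real.pi * r : ℝ) * Complex.I) = (-1 : ℂ) ^ r := by
    push_cast
    rw [show (Real.pi : ℂ) * r * Complex.I = r * (Real.pi * Complex.I) by ring,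
      Complex.exp_nat_mul, Complex.exp_pi_mul_I]
  have hpir' : Complex.exp ((-(Real.pi * r) : ℝ) * Complex.I) = (-1 : ℂ) ^ r := by
    rw [Complex.ofReal_neg, neg_mul, Complex.exp_neg, hpir, ← inv_pow]
    norm_num
  rw [hpir, hpir']

theorem inj_aux (β : ℕ) (hβ : 2 ≤ β) :
    Set.InjOn (fun r : ℕ => Real.cos (Real.pi * r / β) / Real.sin (Real.pi * r / β))
      (Finset.Icc 1 (β-1) : Finset ℕ) := by
  have hβ0 : (0:ℝ) < β := by positivity
  have hbound : ∀ r : ℕ, r ∈ Finset.Icc 1 (β-1) →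
      0 < Real.pi * r / β ∧ Real.pi * r / β < Real.pi := by
    intro r hr
    have hr1 : 1 ≤ r := (Finset.mem_Icc.mp hr).1
    have hr2 : r ≤ β - 1 := (Finset.mem_Icc.mp hr).2
    have hrβ : (r:ℝ) < β := by
      have : r < β := lt_of_le_of_lt hr2 (Nat.sub_lt (by omega) one_pos)
      exact_mod_cast this
    constructor
    · exact div_pos (mul_pos Real.pi_pos (by exact_mod_cast hr1)) hβ0
    · rw [div_lt_iff₀ hβ0]; nlinarith [Real.pi_pos]
  intro r hr s hs h
  simp only [Finset.coe_Icc, Set.mem_Icc] at hr hs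
  have hr' : r ∈ Finset.Icc 1 (β-1) := Finset.mem_Icc.mpr hr
  have hs' : s ∈ Finset.Icc 1 (β-1) := Finset.mem_Icc.mpr hs
  obtain ⟨h1r, h2r⟩ := hbound r hr'
  obtain ⟨h1s, h2s⟩ := hbound s hs'
  set a := Real.pi * r / β
  set b := Real.pi * s / β
  have hsa : 0 < Real.sin a := Real.sin_pos_of_pos_of_lt_pi h1r h2r
  have hsb : 0 < Real.sin b := Real.sin_pos_of_pos_of_lt_pi h1s h2s
  simp only at h
  have hcross : Real.cos a * Real.sin b = Real.cos b * Real.sin a := by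
    field_simp at h
    exact (div_eq_div_iff hsa.ne' hsb.ne').mp h
  have hdiff : Real.sin (b - a) = 0 := by
    rw [Real.sin_sub]
    nlinarith [hcross]
  have hab : b = a := by
    have h1 : -Real.pi < b - a := by linarith
    have h2 : b - a < Real.pi := by linarith
    have := (Real.sin_eq_zero_iff_of_lt_of_lt h1 h2).mp hdiff
    linarith
  have : (r:ℝ) = s := by
    have hπ : Real.pi ≠ 0 := Real.pi_ne_zero
    have hab' : Real.pi * (s:ℝ) / β = Real.pi * (r:ℝ) / β := hab
    have hβ0' : (β:ℝ) ≠ 0 := ne_of_gt hβ0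
    rw [div_left_inj' hβ0', mul_right_inj' hπ] at hab'
    exact hab'.symm
  exact_mod_cast this

noncomputable def Mm (β : ℕ) : Multiset ℂ :=
  (Finset.Icc 1 (β-1)).val.map
    (fun r : ℕ => ((Real.cos (Real.pi * r / β) / Real.sin (Real.pi * r / β) : ℝ) : ℂ))

theorem esymm_aux (β : ℕ) (hβ : 2 ≤ β) :
    (Mm β).esymm 1 = 0 ∧ (β:ℂ) * (Mm β).esymm 2 = -(β.choose 3 : ℂ) ∧ (Mm β).esymm 3 = 0 ∧
      (β:ℂ) * (Mm β).esymm 4 = (β.choose 5 : ℂ) := by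
  have hβ0 : (β : ℂ) ≠ 0 := Nat.cast_ne_zero.mpr (by omega)
  set G : Polynomial ℂ := (X + C Complex.I)^β - (X - C Complex.I)^β with hGdef
  have hcoeff : ∀ m, G.coeff m
      = (Complex.I^(β-m) - (-Complex.I)^(β-m)) * (β.choose m : ℂ) := by
    intro m
    rw [hGdef, coeff_sub, sub_eq_add_neg X (C Complex.I), ← C_neg,
      coeff_X_add_C_pow, coeff_X_add_C_pow]
    ring
  have hlead : G.coeff (β-1) = 2 * Complex.I * β := by
    rw [hcoeff, show β - (β-1) = 1 by omega,
      show β - 1 = β - 1 from rfl]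
    rw [show β.choose (β-1) = β by
      rw [show β - 1 = β - 1 from rfl, Nat.choose_symm (by omega : 1 ≤ β), Nat.choose_one_right]]
    ring
  have hlead0 : G.coeff (β-1) ≠ 0 := by
    rw [hlead]
    simp only [ne_eq, mul_eq_zero]
    push_neg
    refine ⟨⟨two_ne_zero, Complex.I_ne_zero⟩, hβ0⟩
  have hzero : ∀ m, β ≤ m → G.coeff m = 0 := by
    intro m hm
    rcases eq_or_lt_of_le hm with h | h
    · rw [hcoeff, ← h, Nat.sub_self]
      simp
    · rw [hcoeff, Nat.choose_eq_zero_of_lt h]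
      simp
  have hdeg : G.natDegree = β - 1 := by
    apply le_antisymm
    · rw [Polynomial.natDegree_le_iff_coeff_eq_zero]
      intro m hm
      exact hzero m (by omega)
    · exact Polynomial.le_natDegree_of_ne_zero hlead0
  have hG0 : G ≠ 0 := fun h => hlead0 (by rw [h, Polynomial.coeff_zero])
  have hcardM : Multiset.card (Mm β) = β - 1 := by
    rw [Mm, Multiset.card_map]
    have := Nat.card_Icc 1 (β-1)
    rw [Finset.card_def] at this
    omega
  have hnodup : (Mm β).Nodup := by
    rw [Mm]
    apply Multiset.Nodup.map_on
    · intro a ha b hb hab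
      apply inj_aux β hβ
      · simpa using ha
      · simpa using hb
      · exact_mod_cast hab
    · exact (Finset.Icc 1 (β-1)).nodup
  have hMroots : Mm β ≤ G.roots := by
    rw [Multiset.le_iff_subset hnodup]
    intro x hx
    rw [Mm, Multiset.mem_map] at hx
    obtain ⟨r, hr, rfl⟩ := hx
    rw [Polynomial.mem_roots hG0]
    rw [Polynomial.IsRoot, hGdef]
    simp only [eval_sub, eval_pow, eval_add, eval_X, eval_C]
    rw [sub_eq_zero]
    exact root_aux β hβ r hr
  have hroots : G.roots = Mm β := by
    symm
    apply Multiset.eq_of_le_of_card_le hMroots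
    rw [hcardM]
    rw [← hdeg]
    exact Polynomial.card_roots' G
  have hfact : G = C (2 * Complex.I * β) * ((Mm β).map (fun a => X - C a)).prod := by
    have hs := Polynomial.Splits.eq_prod_roots (IsAlgClosed.splits G)
    rwa [Polynomial.leadingCoeff, hdeg, hlead, hroots] at hs
  have hesymm : ∀ k, k ≤ β - 1 →
      (Complex.I^(k+1) - (-Complex.I)^(k+1)) * (β.choose (β-1-k) : ℂ)
        = 2 * Complex.I * β * ((-1)^k * (Mm β).esymm k) := by
    intro k hk
    have h1 : G.coeff (β-1-k) = _ := hcoeff (β-1-k)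
    rw [hfact, Polynomial.coeff_C_mul,
      Multiset.prod_X_sub_C_coeff (Mm β) (by rw [hcardM]; omega),
      hcardM, show β - 1 - (β-1-k) = k by omega] at h1
    rw [show β - (β-1-k) = k+1 by omega] at h1
    rw [h1]
  have hEzero : ∀ k, β - 1 < k → (Mm β).esymm k = 0 := by
    intro k hk
    rw [Multiset.esymm, Multiset.powersetCard_eq_empty k (by rw [hcardM]; omega)]
    simp
  have h2I : (2 : ℂ) * Complex.I ≠ 0 := by
    simp [Complex.I_ne_zero]
  have hI2 : Complex.I ^ 2 = -1 := Complex.I_sq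
  have hI3 : Complex.I ^ 3 = -Complex.I := by
    rw [pow_succ, hI2]; ring
  have hI4 : Complex.I ^ 4 = 1 := by
    rw [pow_succ, hI3]; simp [Complex.I_mul_I]
  have hI5 : Complex.I ^ 5 = Complex.I := by
    rw [pow_succ, hI4]; ring
  have hE1 : (Mm β).esymm 1 = 0 := by
    have h := hesymm 1 (by omega)
    have hb : (β:ℂ) * (Mm β).esymm 1 = 0 :=
      mul_left_cancel₀ h2I (by linear_combination h)
    rcases mul_eq_zero.mp hb with h' | h'
    · exact absurd h' hβ0
    · exact h'
  have hE3 : (Mm β).esymm 3 = 0 := by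
    rcases le_or_gt β 3 with h | h
    · exact hEzero 3 (by omega)
    · have hh := hesymm 3 (by omega)
      have hb : (β:ℂ) * (Mm β).esymm 3 = 0 :=
        mul_left_cancel₀ h2I (by linear_combination hh)
      rcases mul_eq_zero.mp hb with h' | h'
      · exact absurd h' hβ0
      · exact h'
  have hE2 : (β:ℂ) * (Mm β).esymm 2 = -(β.choose 3 : ℂ) := by
    rcases le_or_gt β 2 with h | h
    · interval_cases β
      rw [hEzero 2 (by omega)]
      norm_num
    · have hh := hesymm 2 (by omega)
      rw [show β - 1 - 2 = β - 3 by omega,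
        show β.choose (β - 3) = β.choose 3 from Nat.choose_symm (by omega)] at hh
      apply mul_left_cancel₀ h2I
      linear_combination -hh + 2*Complex.I*((β.choose 3 : ℕ):ℂ)*Complex.I_sq
  have hE4 : (β:ℂ) * (Mm β).esymm 4 = (β.choose 5 : ℂ) := by
    rcases le_or_gt β 4 with h | h
    · rw [hEzero 4 (by omega), Nat.choose_eq_zero_of_lt (by omega)]
      norm_num
    · have hh := hesymm 4 (by omega)
      rw [show β - 1 - 4 = β - 5 by omega,
        show β.choose (β - 5) = β.choose 5 from Nat.choose_symm (by omega)] at hh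
      apply mul_left_cancel₀ h2I
      linear_combination -hh + 2*Complex.I*((β.choose 5 : ℕ):ℂ)*(Complex.I^2 - 1)*Complex.I_sq
  exact ⟨hE1, hE2, hE3, hE4⟩

theorem psum_aux (β : ℕ) (hβ : 2 ≤ β) :
    (β:ℝ) * (∑ r ∈ Finset.Icc 1 (β-1),
        (Real.cos (Real.pi * r / β) / Real.sin (Real.pi * r / β))^2) = 2 * (β.choose 3 : ℝ) ∧
    (β:ℝ)^2 * (∑ r ∈ Finset.Icc 1 (β-1),
        (Real.cos (Real.pi * r / β) / Real.sin (Real.pi * r / β))^4)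
      = 2 * (β.choose 3 : ℝ)^2 - 4 * (β:ℝ) * (β.choose 5 : ℝ) := by
  set f : ℕ → ℂ :=
    (fun r : ℕ => ((Real.cos (Real.pi * r / β) / Real.sin (Real.pi * r / β) : ℝ) : ℂ)) with hf
  obtain ⟨n1, n2, n3, n4⟩ := newton4 (Finset.Icc 1 (β-1)) f (Mm β).esymm (fun n => rfl)
  obtain ⟨hE1, hE2, hE3, hE4⟩ := esymm_aux β hβ
  set P1 := ∑ r ∈ Finset.Icc 1 (β-1), f r ^ 1
  set P2 := ∑ r ∈ Finset.Icc 1 (β-1), f r ^ 2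
  set P3 := ∑ r ∈ Finset.Icc 1 (β-1), f r ^ 3
  set P4 := ∑ r ∈ Finset.Icc 1 (β-1), f r ^ 4
  have hP1 : P1 = 0 := by rw [n1, hE1]
  have hP2 : (β:ℂ) * P2 = 2 * (β.choose 3 : ℂ) := by
    rw [n2, hP1, hE1]
    linear_combination -2 * hE2
  have hP3 : P3 = 0 := by rw [n3, hP1, hE1, hE3]; ring
  have hP4 : (β:ℂ)^2 * P4 = 2 * (β.choose 3 : ℂ)^2 - 4 * (β:ℂ) * (β.choose 5 : ℂ) := by
    rw [n4, hP3, hP1, hE1, hE3]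
    have h2 : ((β:ℂ) * (Mm β).esymm 2) * ((β:ℂ) * P2) = -(β.choose 3 : ℂ) * (2 * (β.choose 3:ℂ)) := by
      rw [hE2, hP2]
    linear_combination -h2 - 4 * (β:ℂ) * hE4
  constructor
  · have : ((β:ℝ) * (∑ r ∈ Finset.Icc 1 (β-1),
        (Real.cos (Real.pi * r / β) / Real.sin (Real.pi * r / β))^2) : ℂ)
        = ((2 * (β.choose 3 : ℝ) : ℝ) : ℂ) := by
      push_cast
      rw [← hP2]
      norm_num [P2, hf]
    exact_mod_cast this
  · have : ((β:ℝ)^2 * (∑ r ∈ Finset.Icc 1 (β-1),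
        (Real.cos (Real.pi * r / β) / Real.sin (Real.pi * r / β))^4) : ℂ)
        = ((2 * (β.choose 3 : ℝ)^2 - 4 * (β:ℝ) * (β.choose 5 : ℝ) : ℝ) : ℂ) := by
      push_cast
      rw [← hP4]
      norm_num [P4, hf]
    exact_mod_cast this

theorem choose_cast3 (β : ℕ) : (β.choose 3 : ℝ) * 6 = (β:ℝ) * ((β:ℝ)-1) * ((β:ℝ)-2) := by
  have h1 := descPochhammer_eval_eq_descFactorial (R := ℝ) β 3
  have h2 : β.descFactorial 3 = 6 * β.choose 3 := Nat.descFactorial_eq_factorial_mul_choose β 3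
  rw [h2] at h1
  simp only [descPochhammer_succ_right, descPochhammer_zero, Polynomial.eval_mul,
    Polynomial.eval_sub, Polynomial.eval_one, Polynomial.eval_X, Polynomial.eval_natCast] at h1
  push_cast at h1
  push_cast
  linarith [h1]

theorem choose_cast5 (β : ℕ) : (β.choose 5 : ℝ) * 120
    = (β:ℝ) * ((β:ℝ)-1) * ((β:ℝ)-2) * ((β:ℝ)-3) * ((β:ℝ)-4) := by
  have h1 := descPochhammer_eval_eq_descFactorial (R := ℝ) β 5
  have h2 : β.descFactorial 5 = 120 * β.choose 5 := Nat.descFactorial_eq_factorial_mul_choose β 5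
  rw [h2] at h1
  simp only [descPochhammer_succ_right, descPochhammer_zero, Polynomial.eval_mul,
    Polynomial.eval_sub, Polynomial.eval_one, Polynomial.eval_X, Polynomial.eval_natCast] at h1
  push_cast at h1
  push_cast
  linarith [h1]

theorem stmt_3 (β : ℕ) (hβ : 2 ≤ β) :
    ∑ r ∈ Finset.Icc 1 (β - 1), 1 / Real.sin (Real.pi * r / β) ^ 4 =
      ((β : ℝ) ^ 4 + 10 * (β : ℝ) ^ 2 - 11) / 45 := by
  have hβ0 : (0:ℝ) < β := by positivity
  have hβ0' : (β:ℝ) ≠ 0 := ne_of_gt hβ0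
  have hsin : ∀ r ∈ Finset.Icc 1 (β-1), 0 < Real.sin (Real.pi * r / β) := by
    intro r hr
    have hr1 : 1 ≤ r := (Finset.mem_Icc.mp hr).1
    have hr2 : r ≤ β - 1 := (Finset.mem_Icc.mp hr).2
    have hrβ : (r:ℝ) < β := by
      have : r < β := lt_of_le_of_lt hr2 (Nat.sub_lt (by omega) one_pos)
      exact_mod_cast this
    apply Real.sin_pos_of_pos_of_lt_pi
    · exact div_pos (mul_pos Real.pi_pos (by exact_mod_cast hr1)) hβ0
    · rw [div_lt_iff₀ hβ0]; nlinarith [Real.pi_pos]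
  have hterm : ∀ r ∈ Finset.Icc 1 (β-1), 1 / Real.sin (Real.pi * r / β) ^ 4
      = 1 + 2 * (Real.cos (Real.pi * r / β) / Real.sin (Real.pi * r / β))^2
          + (Real.cos (Real.pi * r / β) / Real.sin (Real.pi * r / β))^4 := by
    intro r hr
    have hs := hsin r hr
    have hs0 : Real.sin (Real.pi * r / β) ≠ 0 := ne_of_gt hs
    have hpy : Real.cos (Real.pi * r / β)^2 = 1 - Real.sin (Real.pi * r / β)^2 :=
      Real.cos_sq' _
    have key : (1:ℝ) + (Real.cos (Real.pi * r / β) / Real.sin (Real.pi * r / β))^2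
        = 1 / Real.sin (Real.pi * r / β)^2 := by
      field_simp
      linarith [Real.sin_sq_add_cos_sq (Real.pi * r / β)]
    calc 1 / Real.sin (Real.pi * r / β) ^ 4
        = (1 / Real.sin (Real.pi * r / β)^2)^2 := by ring
      _ = ((1:ℝ) + (Real.cos (Real.pi * r / β) / Real.sin (Real.pi * r / β))^2)^2 := by rw [key]
      _ = _ := by ring
  rw [Finset.sum_congr rfl hterm]
  rw [Finset.sum_add_distrib, Finset.sum_add_distrib, Finset.sum_const, Nat.card_Icc,
    ← Finset.mul_sum]
  obtain ⟨hq2, hq4⟩ := psum_aux β hβ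
  have hcard : ((β - 1 + 1 - 1 : ℕ) : ℝ) = (β:ℝ) - 1 := by
    have : (β - 1 + 1 - 1 : ℕ) = β - 1 := by omega
    rw [this, Nat.cast_sub (by omega)]
    norm_num
  rw [nsmul_eq_mul, hcard]
  have hc3 := choose_cast3 β
  have hc5 := choose_cast5 β
  have e2 : ∑ r ∈ Finset.Icc 1 (β-1),
      (Real.cos (Real.pi * r / β) / Real.sin (Real.pi * r / β))^2
      = 2 * (β.choose 3 : ℝ) / β := by
    rw [eq_div_iff hβ0', mul_comm _ ((β:ℝ))]
    exact hq2
  have e4 : ∑ r ∈ Finset.Icc 1 (β-1),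
      (Real.cos (Real.pi * r / β) / Real.sin (Real.pi * r / β))^4
      = (2 * (β.choose 3 : ℝ)^2 - 4 * (β:ℝ) * (β.choose 5 : ℝ)) / (β:ℝ)^2 := by
    rw [eq_div_iff (pow_ne_zero 2 hβ0'), mul_comm _ ((β:ℝ)^2)]
    exact hq4
  have hC3' : (β.choose 3 : ℝ) = (β:ℝ) * ((β:ℝ)-1) * ((β:ℝ)-2) / 6 := by
    rw [eq_div_iff (by norm_num : (6:ℝ) ≠ 0)]; exact hc3
  have hC5' : (β.choose 5 : ℝ) = (β:ℝ) * ((β:ℝ)-1) * ((β:ℝ)-2) * ((β:ℝ)-3) * ((β:ℝ)-4) / 120 := by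
    rw [eq_div_iff (by norm_num : (120:ℝ) ≠ 0)]; exact hc5
  rw [hC3'] at e2
  rw [hC3', hC5'] at e4
  rw [e2, e4]
  field_simp
  ring
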